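/- If μ1 ⊑_R μ2 via the subset condition fails, i.e. μ1 ⋢_R μ2, then there exists a witness subset S ⊆ supp(μ1) with μ1(S) > μ2(R(S)). -/

import Mathlib

open Classical

structure FDist (S : Type) [Fintype S] where
  pmf : S → ℝ
  nonneg : ∀ s, 0 ≤ pmf s
  sum_one : ∑ s, pmf s = 1

namespace FDist

variable {S S1 S2 : Type} [Fintype S] [Fintype S1] [Fintype S2]

noncomputable def prob (μ : FDist S) (T : Set S) : ℝ :=
  ∑ s, if s ∈ T then μ.pmf s else 0

def supp (μ : FDist S) : Set S := {s | 0 < μ.pmf s}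

noncomputable def dirac (s : S) : FDist S where
  pmf t := if t = s then 1 else 0
  nonneg t := by split <;> norm_num
  sum_one := by simp

noncomputable def prod (μ1 : FDist S1) (μ2 : FDist S2) : FDist (S1 × S2) where
  pmf p := μ1.pmf p.1 * μ2.pmf p.2
  nonneg p := mul_nonneg (μ1.nonneg _) (μ2.nonneg _)
  sum_one := by
    rw [Fintype.sum_prod_type]
    simp_rw [← Finset.mul_sum, μ2.sum_one, mul_one]
    exact μ1.sum_one

end FDist

/-- Image of a set under a relation: `R(T) = {s2 | ∃ s1 ∈ T, (s1,s2) ∈ R}`. -/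
def relImage {S1 S2 : Type} (R : Set (S1 × S2)) (T : Set S1) : Set S2 :=
  {s2 | ∃ s1 ∈ T, (s1, s2) ∈ R}

/-- The lifting `μ1 ⊑_R μ2` of a relation on states to distributions,
via the Hall-type subset condition. -/
def liftRel {S1 S2 : Type} [Fintype S1] [Fintype S2]
    (R : Set (S1 × S2)) (μ1 : FDist S1) (μ2 : FDist S2) : Prop :=
  ∀ T ⊆ μ1.supp, μ1.prob T ≤ μ2.prob (relImage R T)

/-- A (finite, finitely-branching) labeled probabilistic transition system. -/
structure LPTS (S : Type) (Act : Type) [Fintype S] where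
  start : S
  alpha : Set Act
  trans : S → Act → Set (FDist S)
  trans_mem : ∀ s a μ, μ ∈ trans s a → a ∈ alpha
  finite_trans : ∀ s a, (trans s a).Finite

/-- `R` is a strong simulation between `L1` and `L2`. -/
def StrongSim {S1 S2 Act : Type} [Fintype S1] [Fintype S2]
    (L1 : LPTS S1 Act) (L2 : LPTS S2 Act) (R : Set (S1 × S2)) : Prop :=
  ∀ s1 s2, (s1, s2) ∈ R → ∀ a μ1, μ1 ∈ L1.trans s1 a →
    ∃ μ2 ∈ L2.trans s2 a, liftRel R μ1 μ2

/-- `L2` strongly simulates `L1` (written `L1 ≼ L2`). -/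
def Sim {S1 S2 Act : Type} [Fintype S1] [Fintype S2]
    (L1 : LPTS S1 Act) (L2 : LPTS S2 Act) : Prop :=
  ∃ R, StrongSim L1 L2 R ∧ (L1.start, L2.start) ∈ R

/-- `μ1 ⊑_R μ2` via existence of a weight function with marginals `μ1`, `μ2`
and support contained in `R`. -/
def hasWeight {S1 S2 : Type} [Fintype S1] [Fintype S2]
    (R : Set (S1 × S2)) (μ1 : FDist S1) (μ2 : FDist S2) : Prop :=
  ∃ w : S1 × S2 → ℝ,
    (∀ p, 0 ≤ w p ∧ w p ≤ 1) ∧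
    (∀ s1, μ1.pmf s1 = ∑ s2, w (s1, s2)) ∧
    (∀ s2, μ2.pmf s2 = ∑ s1, w (s1, s2)) ∧
    (∀ p, 0 < w p → p ∈ R)


section Strassen

variable {S1 S2 : Type} [Fintype S1] [Fintype S2]

lemma FDist.pmf_le_one (μ : FDist S1) (s : S1) : μ.pmf s ≤ 1 := by
  rw [← μ.sum_one]
  exact Finset.single_le_sum (fun t _ => μ.nonneg t) (Finset.mem_univ s)

/-- Feasibility of a subflow. -/
def Feas (R : Set (S1 × S2)) (μ1 : FDist S1) (μ2 : FDist S2) (w : S1 × S2 → ℝ) : Prop :=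
  (∀ p, 0 ≤ w p) ∧ (∀ p, 0 < w p → p ∈ R) ∧
    (∀ s1, ∑ t, w (s1, t) ≤ μ1.pmf s1) ∧
    (∀ s2, ∑ t, w (t, s2) ≤ μ2.pmf s2)

noncomputable def total (w : S1 × S2 → ℝ) : ℝ := ∑ p, w p

/-- Reachability of a column by an alternating path from a row with slack. -/
def reaches (R : Set (S1 × S2)) (μ1 : FDist S1) (w : S1 × S2 → ℝ) : ℕ → S2 → Prop
  | 0, s2 => ∃ s1, (∑ t, w (s1, t)) < μ1.pmf s1 ∧ (s1, s2) ∈ R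
  | n + 1, s2 => ∃ s2' s1, reaches R μ1 w n s2' ∧ 0 < w (s1, s2') ∧ (s1, s2) ∈ R

lemma reaches_mono (R : Set (S1 × S2)) (μ1 : FDist S1) {w w' : S1 × S2 → ℝ}
    (hrow : ∀ s1, (∑ t, w' (s1, t)) = ∑ t, w (s1, t))
    (hpos : ∀ p, 0 < w p → 0 < w' p) :
    ∀ n s2, reaches R μ1 w n s2 → reaches R μ1 w' n s2 := by
  intro n
  induction n with
  | zero =>
    rintro s2 ⟨s1, hs, hR⟩
    exact ⟨s1, by rw [hrow]; exact hs, hR⟩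
  | succ n ih =>
    rintro s2 ⟨s2', s1, hr, hw, hR⟩
    exact ⟨s2', s1, ih _ hr, hpos _ hw, hR⟩

lemma total_eq_sum_rows (w : S1 × S2 → ℝ) : total w = ∑ s1, ∑ t, w (s1, t) := by
  rw [total, Fintype.sum_prod_type]

lemma total_eq_sum_cols (w : S1 × S2 → ℝ) : total w = ∑ s2, ∑ t, w (t, s2) := by
  rw [total, Fintype.sum_prod_type_right]

lemma augment (R : Set (S1 × S2)) (μ1 : FDist S1) (μ2 : FDist S2) :
    ∀ n (w : S1 × S2 → ℝ), Feas R μ1 μ2 w → ∀ s2, reaches R μ1 w n s2 →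
      (∑ t, w (t, s2)) < μ2.pmf s2 →
      ∃ w', Feas R μ1 μ2 w' ∧ total w < total w' := by
  intro n
  induction n with
  | zero =>
    rintro w ⟨hnn, hsupp, hrow, hcol⟩ s2 ⟨s1, hslack, hR⟩ hcs
    set a := μ1.pmf s1 - ∑ t, w (s1, t) with ha
    set b := μ2.pmf s2 - ∑ t, w (t, s2) with hb
    have hae : 0 < a := by simp [ha]; linarith
    have hbe : 0 < b := by simp [hb]; linarith
    set ε := min a b with he
    have heps : 0 < ε := lt_min hae hbe
    refine ⟨fun p => w p + if p = (s1, s2) then ε else 0, ⟨?_, ?_, ?_, ?_⟩, ?_⟩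
    · intro p; have := hnn p; dsimp only; split <;> linarith
    · intro p hp
      by_cases hps : p = (s1, s2)
      · rw [hps]; exact hR
      · simp only [hps, if_false, add_zero] at hp; exact hsupp p hp
    · intro u
      rw [Finset.sum_add_distrib]
      by_cases hu : u = s1
      · subst hu
        have : (∑ t, if ((u, t) : S1 × S2) = (u, s2) then ε else 0) = ε := by
          simp [Prod.ext_iff]
        rw [this]
        have := min_le_left a b
        linarith [hrow u]
      · have : (∑ t, if ((u, t) : S1 × S2) = (s1, s2) then ε else 0) = 0 := by
          simp [Prod.ext_iff, hu]
        rw [this, add_zero]; exact hrow u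
    · intro v
      rw [Finset.sum_add_distrib]
      by_cases hv : v = s2
      · subst hv
        have : (∑ t, if ((t, v) : S1 × S2) = (s1, v) then ε else 0) = ε := by
          simp [Prod.ext_iff]
        rw [this]
        have := min_le_right a b
        linarith
      · have : (∑ t, if ((t, v) : S1 × S2) = (s1, s2) then ε else 0) = 0 := by
          simp [Prod.ext_iff, hv]
        rw [this, add_zero]; exact hcol v
    · rw [total, total, Finset.sum_add_distrib]
      have : (∑ p : S1 × S2, if p = (s1, s2) then ε else 0) = ε := by simp
      rw [this]; linarith
  | succ n ih =>
    rintro w hf s2 ⟨s2', s1, hr, hw, hR⟩ hcs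
    obtain ⟨hnn, hsupp, hrow, hcol⟩ := hf
    by_cases hss : s2' = s2
    · subst hss; exact ih w ⟨hnn, hsupp, hrow, hcol⟩ s2' hr hcs
    set b := μ2.pmf s2 - ∑ t, w (t, s2) with hb
    have hbe : 0 < b := by simp [hb]; linarith
    set ε := min (w (s1, s2')) b / 2 with he
    have heps : 0 < ε := by
      apply div_pos _ (by norm_num)
      exact lt_min hw hbe
    have hew : ε ≤ w (s1, s2') / 2 := by
      apply div_le_div_of_nonneg_right (min_le_left _ _) (by norm_num)
    have heb : ε ≤ b := by
      have := min_le_right (w (s1, s2')) b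
      linarith
    set w'' : S1 × S2 → ℝ :=
      fun p => w p + (if p = (s1, s2) then ε else 0) - (if p = (s1, s2') then ε else 0)
      with hw''
    have hne : ((s1, s2) : S1 × S2) ≠ (s1, s2') := by
      simp [Prod.ext_iff]; exact fun h => hss h.symm
    have hposk : ∀ p, 0 < w p → 0 < w'' p := by
      intro p hp
      simp only [hw'']
      by_cases h1 : p = (s1, s2)
      · subst h1; rw [if_pos rfl, if_neg hne]; linarith
      · rw [if_neg h1]
        by_cases h2 : p = (s1, s2')
        · subst h2; rw [if_pos rfl]; linarith
        · rw [if_neg h2]; linarith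
    have hrow'' : ∀ u, (∑ t, w'' (u, t)) = ∑ t, w (u, t) := by
      intro u
      simp only [hw'']
      rw [Finset.sum_sub_distrib, Finset.sum_add_distrib]
      by_cases hu : u = s1
      · subst hu
        have h1 : (∑ t, if ((u, t) : S1 × S2) = (u, s2) then ε else 0) = ε := by
          simp [Prod.ext_iff]
        have h2 : (∑ t, if ((u, t) : S1 × S2) = (u, s2') then ε else 0) = ε := by
          simp [Prod.ext_iff]
        rw [h1, h2]; ring
      · have h1 : (∑ t, if ((u, t) : S1 × S2) = (s1, s2) then ε else 0) = 0 := by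
          simp [Prod.ext_iff, hu]
        have h2 : (∑ t, if ((u, t) : S1 × S2) = (s1, s2') then ε else 0) = 0 := by
          simp [Prod.ext_iff, hu]
        rw [h1, h2]; ring
    have hcol'' : ∀ v, (∑ t, w'' (t, v)) =
        (∑ t, w (t, v)) + (if v = s2 then ε else 0) - (if v = s2' then ε else 0) := by
      intro v
      simp only [hw'']
      rw [Finset.sum_sub_distrib, Finset.sum_add_distrib]
      congr 1
      · congr 1
        by_cases hv : v = s2
        · subst hv; simp [Prod.ext_iff]
        · simp [Prod.ext_iff, hv]
      · by_cases hv : v = s2'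
        · subst hv; simp [Prod.ext_iff]
        · simp [Prod.ext_iff, hv]
    have hfeas'' : Feas R μ1 μ2 w'' := by
      refine ⟨?_, ?_, ?_, ?_⟩
      · intro p
        simp only [hw'']
        by_cases h1 : p = (s1, s2)
        · subst h1; rw [if_pos rfl, if_neg hne]; have := hnn (s1, s2); linarith
        · rw [if_neg h1]
          by_cases h2 : p = (s1, s2')
          · subst h2; rw [if_pos rfl]; linarith
          · rw [if_neg h2]; have := hnn p; linarith
      · intro p hp
        by_cases h1 : p = (s1, s2)
        · subst h1; exact hR
        · apply hsupp
          simp only [hw'', if_neg h1] at hp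
          by_cases h2 : p = (s1, s2')
          · subst h2; exact hw
          · rw [if_neg h2] at hp; linarith
      · intro u; rw [hrow'' u]; exact hrow u
      · intro v
        rw [hcol'' v]
        by_cases hv : v = s2
        · subst hv; rw [if_pos rfl, if_neg (fun h => hss h.symm)]
          simp only [hb] at heb; linarith
        · rw [if_neg hv]
          by_cases hv2 : v = s2'
          · rw [if_pos hv2]; subst hv2; have := hcol v; linarith
          · rw [if_neg hv2]; have := hcol v; linarith
    have hr'' : reaches R μ1 w'' n s2' := reaches_mono R μ1 hrow'' hposk n s2' hr
    have hcs'' : (∑ t, w'' (t, s2')) < μ2.pmf s2' := by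
      rw [hcol'' s2', if_neg hss, if_pos rfl]
      have := hcol s2'
      linarith
    obtain ⟨w', hw', hlt⟩ := ih w'' hfeas'' s2' hr'' hcs''
    refine ⟨w', hw', ?_⟩
    have : total w'' = total w := by
      rw [total_eq_sum_rows, total_eq_sum_rows]
      exact Finset.sum_congr rfl fun u _ => hrow'' u
    linarith

lemma exists_max (R : Set (S1 × S2)) (μ1 : FDist S1) (μ2 : FDist S2) :
    ∃ w, Feas R μ1 μ2 w ∧ ∀ w', Feas R μ1 μ2 w' → total w' ≤ total w := by
  have hzero : Feas R μ1 μ2 (fun _ => 0) := by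
    refine ⟨fun p => le_refl 0, fun p hp => absurd hp (lt_irrefl 0), ?_, ?_⟩
    · intro s1; simp [μ1.nonneg s1]
    · intro s2; simp [μ2.nonneg s2]
  have hclosed : IsClosed {w : S1 × S2 → ℝ | Feas R μ1 μ2 w} := by
    have h1 : IsClosed {w : S1 × S2 → ℝ | ∀ p, 0 ≤ w p} := by
      rw [Set.setOf_forall]
      exact isClosed_iInter fun p => isClosed_le continuous_const (continuous_apply p)
    have h2 : IsClosed {w : S1 × S2 → ℝ | ∀ p, 0 < w p → p ∈ R} := by
      rw [Set.setOf_forall]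
      refine isClosed_iInter fun p => ?_
      by_cases hp : p ∈ R
      · simp only [hp, imp_true_iff]; exact isClosed_univ
      · have : {w : S1 × S2 → ℝ | 0 < w p → p ∈ R} = {w | w p ≤ 0} := by
          ext w; simp [hp, not_lt]
        rw [this]
        exact isClosed_le (continuous_apply p) continuous_const
    have h3 : IsClosed {w : S1 × S2 → ℝ | ∀ s1, ∑ t, w (s1, t) ≤ μ1.pmf s1} := by
      rw [Set.setOf_forall]
      exact isClosed_iInter fun s1 => isClosed_le
        (by exact continuous_finset_sum _ fun t _ => continuous_apply (s1, t)) continuous_const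
    have h4 : IsClosed {w : S1 × S2 → ℝ | ∀ s2, ∑ t, w (t, s2) ≤ μ2.pmf s2} := by
      rw [Set.setOf_forall]
      exact isClosed_iInter fun s2 => isClosed_le
        (by exact continuous_finset_sum _ fun t _ => continuous_apply (t, s2)) continuous_const
    have : {w : S1 × S2 → ℝ | Feas R μ1 μ2 w} =
        ({w | ∀ p, 0 ≤ w p} ∩ {w | ∀ p, 0 < w p → p ∈ R}) ∩
        ({w | ∀ s1, ∑ t, w (s1, t) ≤ μ1.pmf s1} ∩ {w | ∀ s2, ∑ t, w (t, s2) ≤ μ2.pmf s2}) := by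
      ext w
      simp only [Set.mem_setOf_eq, Set.mem_inter_iff, Feas]
      tauto
    rw [this]
    exact ((h1.inter h2).inter (h3.inter h4))
  have hsub : {w : S1 × S2 → ℝ | Feas R μ1 μ2 w} ⊆ Set.Icc 0 1 := by
    rintro w ⟨hnn, _, hrow, _⟩
    constructor
    · intro p; exact hnn p
    · intro p
      calc w p ≤ ∑ t, w (p.1, t) :=
            Finset.single_le_sum (fun t _ => hnn (p.1, t)) (Finset.mem_univ p.2)
        _ ≤ μ1.pmf p.1 := hrow p.1
        _ ≤ 1 := μ1.pmf_le_one p.1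
  have hcompact : IsCompact {w : S1 × S2 → ℝ | Feas R μ1 μ2 w} :=
    IsCompact.of_isClosed_subset isCompact_Icc hclosed hsub
  have hcont : Continuous (total : (S1 × S2 → ℝ) → ℝ) :=
    continuous_finset_sum _ fun p _ => continuous_apply p
  obtain ⟨w, hwF, hmax⟩ := hcompact.exists_isMaxOn ⟨fun _ => 0, hzero⟩ hcont.continuousOn
  exact ⟨w, hwF, fun w' hw' => hmax hw'⟩

end Strassen

/-- If `μ1 ⋢_R μ2` then there is a witness subset `T` of the support of `μ1`
with `μ1(T) > μ2(R(T))`. -/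
theorem witness_of_not_hasWeight {S1 S2 : Type} [Fintype S1] [Fintype S2]
    (R : Set (S1 × S2)) (μ1 : FDist S1) (μ2 : FDist S2)
    (h : ¬ hasWeight R μ1 μ2) :
    ∃ T ⊆ μ1.supp, μ2.prob (relImage R T) < μ1.prob T := by
  by_contra hcon
  push_neg at hcon
  obtain ⟨w, hwF, hmax⟩ := exists_max R μ1 μ2
  obtain ⟨hnn, hsupp, hrow, hcol⟩ := hwF
  have htot_le : total w ≤ 1 := by
    rw [total_eq_sum_rows, ← μ1.sum_one]
    exact Finset.sum_le_sum fun s1 _ => hrow s1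
  have htot : total w = 1 := by
    by_contra hne1
    have htlt : total w < 1 := lt_of_le_of_ne htot_le hne1
    have hex : ∃ s1, (∑ t, w (s1, t)) < μ1.pmf s1 := by
      by_contra hno
      push_neg at hno
      have h1 : (1 : ℝ) ≤ total w := by
        rw [total_eq_sum_rows, ← μ1.sum_one]
        exact Finset.sum_le_sum fun s1 _ => hno s1
      linarith
    obtain ⟨sa, hsa⟩ := hex
    by_cases hcase : ∃ n s2, reaches R μ1 w n s2 ∧ (∑ t, w (t, s2)) < μ2.pmf s2
    · obtain ⟨n, s2, hr, hc⟩ := hcase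
      obtain ⟨w', hw', hlt⟩ := augment R μ1 μ2 n w ⟨hnn, hsupp, hrow, hcol⟩ s2 hr hc
      exact absurd (hmax w' hw') (not_le.mpr hlt)
    · push_neg at hcase
      have hsat : ∀ s2, (∃ n, reaches R μ1 w n s2) → (∑ t, w (t, s2)) = μ2.pmf s2 := by
        rintro s2 ⟨n, hr⟩
        exact le_antisymm (hcol s2) (hcase n s2 hr)
      set T0 : Set S1 := {s1 | (∑ t, w (s1, t)) < μ1.pmf s1 ∨
        ∃ n s2, reaches R μ1 w n s2 ∧ 0 < w (s1, s2)} with hT0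
      have himg : ∀ s2, s2 ∈ relImage R T0 → ∃ n, reaches R μ1 w n s2 := by
        rintro s2 ⟨s1, hs1, hR⟩
        rcases hs1 with hsl | ⟨n, s2', hr, hwp⟩
        · exact ⟨0, s1, hsl, hR⟩
        · exact ⟨n + 1, s2', s1, hr, hwp, hR⟩
      have key : μ2.prob (relImage R T0) < μ1.prob T0 := by
        have h1 : μ2.prob (relImage R T0) =
            ∑ s2, if s2 ∈ relImage R T0 then ∑ t, w (t, s2) else 0 := by
          unfold FDist.prob
          refine Finset.sum_congr rfl fun s2 _ => ?_
          by_cases hm : s2 ∈ relImage R T0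
          · rw [if_pos hm, if_pos hm, hsat s2 (himg s2 hm)]
          · rw [if_neg hm, if_neg hm]
        have h3 : μ2.prob (relImage R T0) =
            ∑ s1, ∑ s2, if s2 ∈ relImage R T0 then w (s1, s2) else 0 := by
          rw [h1]
          have h2 : ∀ s2, (if s2 ∈ relImage R T0 then ∑ t, w (t, s2) else 0) =
              ∑ t, if s2 ∈ relImage R T0 then w (t, s2) else 0 := by
            intro s2
            split
            · rfl
            · rw [Finset.sum_const_zero]
          simp_rw [h2]
          rw [Finset.sum_comm]
        rw [h3]
        unfold FDist.prob
        apply Finset.sum_lt_sum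
        · intro s1 _
          by_cases hm : s1 ∈ T0
          · rw [if_pos hm]
            calc (∑ s2, if s2 ∈ relImage R T0 then w (s1, s2) else 0)
                ≤ ∑ s2, w (s1, s2) :=
                  Finset.sum_le_sum fun s2 _ => by split <;> [exact le_refl _; exact hnn _]
              _ ≤ μ1.pmf s1 := hrow s1
          · rw [if_neg hm]
            apply le_of_eq
            refine Finset.sum_eq_zero fun s2 _ => ?_
            split_ifs with hmem
            · by_contra hneq
              have hpos : 0 < w (s1, s2) := lt_of_le_of_ne (hnn _) (Ne.symm hneq)
              obtain ⟨n, hr⟩ := himg s2 hmem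
              exact hm (Or.inr ⟨n, s2, hr, hpos⟩)
            · rfl
        · refine ⟨sa, Finset.mem_univ sa, ?_⟩
          have hsaT : sa ∈ T0 := Or.inl hsa
          rw [if_pos hsaT]
          calc (∑ s2, if s2 ∈ relImage R T0 then w (sa, s2) else 0)
              ≤ ∑ s2, w (sa, s2) :=
                Finset.sum_le_sum fun s2 _ => by split <;> [exact le_refl _; exact hnn _]
            _ < μ1.pmf sa := hsa
      set T : Set S1 := T0 ∩ μ1.supp with hT
      have hsubT : T ⊆ μ1.supp := Set.inter_subset_right
      have hprobT : μ1.prob T = μ1.prob T0 := by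
        unfold FDist.prob
        refine Finset.sum_congr rfl fun s _ => ?_
        by_cases h0 : s ∈ T0
        · by_cases hs : s ∈ μ1.supp
          · rw [if_pos ⟨h0, hs⟩, if_pos h0]
          · rw [if_neg (fun hmem => hs hmem.2), if_pos h0]
            have hz : μ1.pmf s = 0 := le_antisymm (not_lt.mp hs) (μ1.nonneg s)
            rw [hz]
        · rw [if_neg (fun hmem => h0 hmem.1), if_neg h0]
      have hmono : μ2.prob (relImage R T) ≤ μ2.prob (relImage R T0) := by
        unfold FDist.prob
        refine Finset.sum_le_sum fun s2 _ => ?_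
        by_cases hm : s2 ∈ relImage R T
        · rw [if_pos hm]
          obtain ⟨s1, hs1, hRm⟩ := hm
          have hm0 : s2 ∈ relImage R T0 := ⟨s1, hs1.1, hRm⟩
          rw [if_pos hm0]
        · rw [if_neg hm]
          split
          · exact μ2.nonneg _
          · exact le_refl _
      have hc2 := hcon T hsubT
      rw [hprobT] at hc2
      linarith
  have hrow_eq : ∀ s1, μ1.pmf s1 = ∑ t, w (s1, t) := by
    have hsum : ∑ s1, (μ1.pmf s1 - ∑ t, w (s1, t)) = 0 := by
      rw [Finset.sum_sub_distrib, μ1.sum_one, ← total_eq_sum_rows, htot, sub_self]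
    have hz := (Finset.sum_eq_zero_iff_of_nonneg
      (fun s1 _ => sub_nonneg.mpr (hrow s1))).mp hsum
    intro s1
    have := hz s1 (Finset.mem_univ s1)
    linarith
  have hcol_eq : ∀ s2, μ2.pmf s2 = ∑ t, w (t, s2) := by
    have hsum : ∑ s2, (μ2.pmf s2 - ∑ t, w (t, s2)) = 0 := by
      rw [Finset.sum_sub_distrib, μ2.sum_one, ← total_eq_sum_cols, htot, sub_self]
    have hz := (Finset.sum_eq_zero_iff_of_nonneg
      (fun s2 _ => sub_nonneg.mpr (hcol s2))).mp hsum
    intro s2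
    have := hz s2 (Finset.mem_univ s2)
    linarith
  refine h ⟨w, fun p => ⟨hnn p, ?_⟩, hrow_eq, hcol_eq, hsupp⟩
  calc w p ≤ ∑ t, w (p.1, t) :=
        Finset.single_le_sum (fun t _ => hnn (p.1, t)) (Finset.mem_univ p.2)
    _ ≤ μ1.pmf p.1 := hrow p.1
    _ ≤ 1 := μ1.pmf_le_one p.1
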